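/- Let G be a group, p a prime, and Gᵢ the Zassenhaus filtration of G over 𝔽ₚ. Then g ∈ Gᵢ implies gᵖ ∈ G_{ip}. -/

import Mathlib

open MonoidAlgebra

/-- The augmentation ideal ω of 𝔽ₚ[G], as a submodule:
    the span of all elements (1 - g)·c (this coincides with the two-sided ideal
    generated by the elements 1 - g). -/
noncomputable def zassOmegaPow (p : ℕ) (G : Type*) [Group G] :
    ℕ → Submodule (ZMod p) (MonoidAlgebra (ZMod p) G)
  | 0 => ⊤
  | (i + 1) => Submodule.span (ZMod p)
      {x | ∃ g : G, ∃ b ∈ zassOmegaPow p G i,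
        x = (1 - MonoidAlgebra.of (ZMod p) G g) * b}

/-- The Zassenhaus filtration Gᵢ = {g ∈ G : 1 - g ∈ ωⁱ}. -/
noncomputable def zassFil (p : ℕ) (G : Type*) [Group G] (i : ℕ) : Set G :=
  {g : G | (1 : MonoidAlgebra (ZMod p) G) - MonoidAlgebra.of (ZMod p) G g ∈ zassOmegaPow p G i}


/-- For the Zassenhaus filtration over 𝔽ₚ: g ∈ Gᵢ implies gᵖ ∈ G_{ip}. -/
lemma zass_gen_mem {p : ℕ} {G : Type*} [Group G] (i : ℕ) (g : G)
    {d : MonoidAlgebra (ZMod p) G} (hd : d ∈ zassOmegaPow p G i) :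
    (1 - MonoidAlgebra.of (ZMod p) G g) * d ∈ zassOmegaPow p G (i + 1) :=
  Submodule.subset_span ⟨g, d, hd, rfl⟩

lemma zass_mul_mem_succ {p : ℕ} {G : Type*} [Group G] (i : ℕ)
    {b : MonoidAlgebra (ZMod p) G} (hb : b ∈ zassOmegaPow p G (i + 1))
    (c : MonoidAlgebra (ZMod p) G) : c * b ∈ zassOmegaPow p G (i + 1) := by
  induction hb using Submodule.span_induction with
  | mem x hx =>
      obtain ⟨g, d, hd, rfl⟩ := hx
      induction c using MonoidAlgebra.induction_linear with
      | zero => simpa using (zassOmegaPow p G (i+1)).zero_mem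
      | add f h hf hh => rw [add_mul]; exact (zassOmegaPow p G (i+1)).add_mem hf hh
      | single a r =>
          have hsr : (MonoidAlgebra.single a r : MonoidAlgebra (ZMod p) G)
              = r • MonoidAlgebra.of (ZMod p) G a := by
            rw [MonoidAlgebra.of_apply, MonoidAlgebra.smul_single', mul_one]
          rw [hsr, smul_mul_assoc]
          refine (zassOmegaPow p G (i+1)).smul_mem r ?_
          have key : MonoidAlgebra.of (ZMod p) G a * ((1 - MonoidAlgebra.of (ZMod p) G g) * d)
              = (1 - MonoidAlgebra.of (ZMod p) G (a * g)) * d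
                - (1 - MonoidAlgebra.of (ZMod p) G a) * d := by
            rw [← mul_assoc, map_mul]
            noncomm_ring
          rw [key]
          exact (zassOmegaPow p G (i+1)).sub_mem (zass_gen_mem i _ hd) (zass_gen_mem i _ hd)
  | zero => simpa using (zassOmegaPow p G (i+1)).zero_mem
  | add x y hx hy ihx ihy => rw [mul_add]; exact (zassOmegaPow p G (i+1)).add_mem ihx ihy
  | smul r x hx ih => rw [mul_smul_comm]; exact (zassOmegaPow p G (i+1)).smul_mem r ih

lemma zass_mul_mem {p : ℕ} {G : Type*} [Group G] :
    ∀ (m n : ℕ) {a b : MonoidAlgebra (ZMod p) G},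
      a ∈ zassOmegaPow p G m → b ∈ zassOmegaPow p G n → a * b ∈ zassOmegaPow p G (m + n)
  | 0, 0, a, b, _, _ => Submodule.mem_top
  | 0, (n+1), a, b, _, hb => by simpa using zass_mul_mem_succ n hb a
  | (m+1), n, a, b, ha, hb => by
      have : m + 1 + n = (m + n) + 1 := by omega
      rw [this]
      induction ha using Submodule.span_induction with
      | mem x hx =>
          obtain ⟨g, d, hd, rfl⟩ := hx
          rw [mul_assoc]
          exact zass_gen_mem _ g (zass_mul_mem m n hd hb)
      | zero => simpa using Submodule.zero_mem _
      | add x y hx hy ihx ihy => rw [add_mul]; exact Submodule.add_mem _ ihx ihy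
      | smul r x hx ih => rw [smul_mul_assoc]; exact Submodule.smul_mem _ r ih

lemma zass_pow_mem {p : ℕ} {G : Type*} [Group G] (i : ℕ)
    {a : MonoidAlgebra (ZMod p) G} (ha : a ∈ zassOmegaPow p G i) :
    ∀ k : ℕ, a ^ k ∈ zassOmegaPow p G (i * k)
  | 0 => by simp [zassOmegaPow]
  | (k+1) => by
      have := zass_mul_mem i (i * k) ha (zass_pow_mem i ha k)
      rw [pow_succ']
      have h : i * (k + 1) = i + i * k := by ring
      rw [h]
      exact this

theorem zassenhaus_pow_p (p : ℕ) [Fact p.Prime] (G : Type*) [Group G]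
    (i : ℕ) (hi : 1 ≤ i) (g : G) (hg : g ∈ zassFil p G i) :
    g ^ p ∈ zassFil p G (i * p) := by
  haveI : CharP (MonoidAlgebra (ZMod p) G) p :=
    charP_of_injective_algebraMap' (ZMod p) p
  have key : (1 - MonoidAlgebra.of (ZMod p) G g) ^ p
      = 1 - MonoidAlgebra.of (ZMod p) G (g ^ p) := by
    rw [sub_pow_char_of_commute p (Commute.one_left _), one_pow, map_pow]
  have := zass_pow_mem i hg p
  rw [key] at this
  exact this
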